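/- Let (x_n) be a nonincreasing summable sequence of positive reals with x_n ≤ r_n for all n (interval-filling), and suppose its cardinal function f satisfies rng(f) = {1, m} for some m ≥ 3. Then 2·x_k ≤ r_k for every k, where r_k = ∑_{n>k} x_n. -/

import Mathlib

open Set

/-- The achievement set of a sequence: all subsums. -/
noncomputable def achSet (x : ℕ → ℝ) : Set ℝ :=
  {t | ∃ S : Set ℕ, ∑' n : S, x n = t}

/-- The cardinal function: the number of representations of `t` as a subsum. -/
noncomputable def cardFun (x : ℕ → ℝ) (t : ℝ) : Cardinal :=
  Cardinal.mk {S : Set ℕ // ∑' n : S, x n = t}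

/-- The tail sum `r_k = ∑_{n > k} x n`. -/
noncomputable def tailSum (x : ℕ → ℝ) (k : ℕ) : ℝ := ∑' n, x (k + 1 + n)

/-- Prepending a term to a sequence. -/
def prepend (y : ℝ) (x : ℕ → ℝ) : ℕ → ℝ := fun n =>
  match n with
  | 0 => y
  | Nat.succ m => x m

namespace Stmt1Aux

open Filter Topology

noncomputable def sig (x : ℕ → ℝ) (S : Set ℕ) : ℝ := ∑' n : S, x n

lemma sig_eq_ind (x : ℕ → ℝ) (S : Set ℕ) : sig x S = ∑' n, S.indicator x n :=
  tsum_subtype S x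

lemma sig_nonneg {x : ℕ → ℝ} (hpos : ∀ n, 0 < x n) (S : Set ℕ) : 0 ≤ sig x S :=
  tsum_nonneg fun n => (hpos n.1).le

lemma sig_mono {x : ℕ → ℝ} (hpos : ∀ n, 0 < x n) (hsum : Summable x)
    {S U : Set ℕ} (h : S ⊆ U) : sig x S ≤ sig x U := by
  rw [sig_eq_ind, sig_eq_ind]
  exact Summable.tsum_le_tsum
    (fun n => Set.indicator_le_indicator_of_subset h (fun a => (hpos a).le) n)
    (hsum.indicator S) (hsum.indicator U)

lemma sig_union {x : ℕ → ℝ} (hsum : Summable x) {S U : Set ℕ} (h : Disjoint S U) :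
    sig x (S ∪ U) = sig x S + sig x U :=
  Summable.tsum_union_disjoint h (hsum.subtype _) (hsum.subtype _)

lemma sig_finset (x : ℕ → ℝ) (s : Finset ℕ) : sig x ↑s = ∑ i ∈ s, x i :=
  Finset.tsum_subtype' s x

lemma sig_singleton (x : ℕ → ℝ) (a : ℕ) : sig x {a} = x a := tsum_singleton a x

lemma sig_le_k (x : ℕ → ℝ) (k : ℕ) :
    sig x {j | j ≤ k} = ∑ i ∈ Finset.range (k + 1), x i := by
  rw [show {j | j ≤ k} = (↑(Finset.range (k + 1)) : Set ℕ) by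
    ext j; simp [Nat.lt_succ_iff], sig_finset]

lemma sig_lt_k (x : ℕ → ℝ) (k : ℕ) :
    sig x {j | j < k} = ∑ i ∈ Finset.range k, x i := by
  rw [show {j | j < k} = (↑(Finset.range k) : Set ℕ) by ext j; simp, sig_finset]

def tailEquiv (k : ℕ) : ℕ ≃ {n : ℕ | k < n} where
  toFun n := ⟨k + 1 + n, by simp only [Set.mem_setOf_eq]; omega⟩
  invFun m := m.1 - (k + 1)
  left_inv n := by show k + 1 + n - (k + 1) = n; omega
  right_inv m := Subtype.ext (by
    have := m.2
    simp only [Set.mem_setOf_eq] at this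
    simp only [Set.mem_setOf_eq]
    omega)

lemma sig_tail (x : ℕ → ℝ) (k : ℕ) : sig x {n | k < n} = tailSum x k := by
  rw [sig, ← (tailEquiv k).tsum_eq (fun n : {n : ℕ | k < n} => x n), tailSum]
  exact tsum_congr fun n => rfl

lemma le_gt_disjoint (k : ℕ) : Disjoint {j | j ≤ k} {n : ℕ | k < n} :=
  Set.disjoint_left.mpr fun a ha ha' => by
    simp only [Set.mem_setOf_eq] at ha ha'; omega

lemma lt_gt_disjoint (k : ℕ) : Disjoint {j | j < k} {n : ℕ | k < n} :=
  Set.disjoint_left.mpr fun a ha ha' => by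
    simp only [Set.mem_setOf_eq] at ha ha'; omega

lemma le_gt_union (k : ℕ) : {j | j ≤ k} ∪ {n : ℕ | k < n} = univ :=
  Set.eq_univ_of_forall fun n => by
    rcases le_or_gt n k with h | h
    · exact Or.inl h
    · exact Or.inr h

lemma sig_univ (x : ℕ → ℝ) (hsum : Summable x) (k : ℕ) :
    sig x univ = (∑ i ∈ Finset.range (k + 1), x i) + tailSum x k := by
  rw [← sig_le_k, ← sig_tail, ← sig_union hsum (le_gt_disjoint k), le_gt_union]

lemma sig_split (x : ℕ → ℝ) (hsum : Summable x) (S : Set ℕ) (k : ℕ) :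
    sig x S = sig x (S ∩ {j | j ≤ k}) + sig x (S ∩ {n | k < n}) := by
  rw [← sig_union hsum ((le_gt_disjoint k).mono inter_subset_right inter_subset_right)]
  congr 1
  rw [← Set.inter_union_distrib_left, le_gt_union, Set.inter_univ]

lemma sig_diff_singleton {x : ℕ → ℝ} (hsum : Summable x) {S : Set ℕ} {a : ℕ} (h : a ∈ S) :
    sig x (S \ {a}) = sig x S - x a := by
  have : sig x (S \ {a} ∪ {a}) = sig x (S \ {a}) + x a := by
    rw [sig_union hsum (by simp [Set.disjoint_left]), sig_singleton]
  rw [Set.diff_union_self, Set.union_eq_self_of_subset_right (by simpa using h)] at this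
  linarith

lemma sig_compl_singleton {x : ℕ → ℝ} (hsum : Summable x) (k a : ℕ) :
    sig x (univ \ {a}) = (∑ i ∈ Finset.range (k + 1), x i) + tailSum x k - x a := by
  rw [sig_diff_singleton hsum (mem_univ a), sig_univ x hsum k]

lemma eq_of_subset_sig_le {x : ℕ → ℝ} (hpos : ∀ n, 0 < x n) (hsum : Summable x)
    {S U : Set ℕ} (h : S ⊆ U) (hle : sig x U ≤ sig x S) : S = U := by
  by_contra hne
  obtain ⟨a, haU, haS⟩ : ∃ a, a ∈ U ∧ a ∉ S := by
    by_contra hc; push_neg at hc; exact hne (Set.Subset.antisymm h hc)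
  have hsub : S ⊆ U \ {a} := fun n hn => ⟨h hn, by simp; rintro rfl; exact haS hn⟩
  have := sig_mono hpos hsum hsub
  rw [sig_diff_singleton hsum haU] at this
  linarith [hpos a]

lemma sig_diff {x : ℕ → ℝ} (hpos : ∀ n, 0 < x n) (hsum : Summable x)
    {B T : Set ℕ} (h : B ⊆ T) : sig x (T \ B) = sig x T - sig x B := by
  have : sig x (B ∪ T \ B) = sig x B + sig x (T \ B) :=
    sig_union hsum (Set.disjoint_left.mpr fun a ha ha' => ha'.2 ha)
  rw [Set.union_diff_cancel h] at this
  linarith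

lemma summable_shift {x : ℕ → ℝ} (hsum : Summable x) (k : ℕ) :
    Summable fun n => x (k + n) := by
  have := (summable_nat_add_iff k).mpr hsum
  exact this.congr fun n => by rw [add_comm]

lemma tailSum_succ {x : ℕ → ℝ} (hsum : Summable x) (k : ℕ) :
    tailSum x k = x (k + 1) + tailSum x (k + 1) := by
  have h := Summable.tsum_eq_zero_add (f := fun n => x (k + 1 + n)) (summable_shift hsum (k + 1))
  simp only [add_zero] at h
  rw [tailSum, h, tailSum]
  congr 1
  exact tsum_congr fun n => by congr 1; omega

lemma tailSum_nonneg {x : ℕ → ℝ} (hpos : ∀ n, 0 < x n) (k : ℕ) : 0 ≤ tailSum x k :=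
  tsum_nonneg fun n => (hpos _).le

lemma tailSum_tendsto {x : ℕ → ℝ} : Tendsto (tailSum x) atTop (𝓝 0) := by
  have h := (tendsto_sum_nat_add x).comp (tendsto_add_atTop_nat 1)
  refine h.congr fun k => ?_
  simp only [Function.comp_apply]
  exact tsum_congr fun n => by congr 1; omega

noncomputable def rem (x : ℕ → ℝ) (k : ℕ) (s : ℝ) : ℕ → ℝ
  | 0 => s
  | n + 1 =>
    if n + 1 ≤ k then s
    else if x (n + 1) ≤ rem x k s n then rem x k s n - x (n + 1) else rem x k s n

lemma rem_of_le (x : ℕ → ℝ) (k : ℕ) (s : ℝ) {n : ℕ} (h : n ≤ k) : rem x k s n = s := by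
  cases n with
  | zero => rfl
  | succ n => rw [rem, if_pos h]

lemma rem_succ_of_gt (x : ℕ → ℝ) (k : ℕ) (s : ℝ) {n : ℕ} (h : ¬ (n + 1 ≤ k)) :
    rem x k s (n + 1) =
      if x (n + 1) ≤ rem x k s n then rem x k s n - x (n + 1) else rem x k s n := by
  rw [rem, if_neg h]

lemma rem_bound {x : ℕ → ℝ} (hpos : ∀ n, 0 < x n) (hsum : Summable x)
    (hIF : ∀ n, x n ≤ tailSum x n) (k : ℕ) {s : ℝ} (h0 : 0 ≤ s) (hs : s ≤ tailSum x k) :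
    ∀ n, k ≤ n → 0 ≤ rem x k s n ∧ rem x k s n ≤ tailSum x n := by
  intro n hn
  induction n, hn using Nat.le_induction with
  | base => rw [rem_of_le x k s le_rfl]; exact ⟨h0, hs⟩
  | succ n hn ih =>
    have hnk : ¬ (n + 1 ≤ k) := by omega
    have hts : tailSum x n = x (n + 1) + tailSum x (n + 1) := tailSum_succ hsum n
    rw [rem_succ_of_gt x k s hnk]
    by_cases hc : x (n + 1) ≤ rem x k s n
    · rw [if_pos hc]
      constructor
      · linarith
      · linarith [ih.2]
    · rw [if_neg hc]
      push_neg at hc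
      exact ⟨ih.1, by linarith [hIF (n + 1)]⟩

def Bset (x : ℕ → ℝ) (k : ℕ) (s : ℝ) : Set ℕ := {n | k < n ∧ x n ≤ rem x k s (n - 1)}

lemma psum {x : ℕ → ℝ} (k : ℕ) (s : ℝ) :
    ∀ n, k ≤ n →
      ∑ i ∈ Finset.range (n + 1), (Bset x k s).indicator x i = s - rem x k s n := by
  intro n hn
  induction n, hn using Nat.le_induction with
  | base =>
    rw [rem_of_le x k s le_rfl, sub_self]
    apply Finset.sum_eq_zero
    intro i hi
    apply Set.indicator_of_notMem
    intro hmem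
    have := hmem.1
    simp only [Finset.mem_range] at hi
    omega
  | succ n hn ih =>
    have hnk : ¬ (n + 1 ≤ k) := by omega
    rw [Finset.sum_range_succ, ih, rem_succ_of_gt x k s hnk]
    by_cases hc : x (n + 1) ≤ rem x k s n
    · have hmem : (n + 1) ∈ Bset x k s := by
        refine ⟨by omega, ?_⟩
        simpa only [Nat.add_sub_cancel] using hc
      rw [Set.indicator_of_mem hmem, if_pos hc]
      ring
    · have hmem : (n + 1) ∉ Bset x k s := by
        intro hmem
        exact hc (by simpa only [Nat.add_sub_cancel] using hmem.2)
      rw [Set.indicator_of_notMem hmem, if_neg hc]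
      ring

lemma greedy {x : ℕ → ℝ} (hpos : ∀ n, 0 < x n) (hsum : Summable x)
    (hIF : ∀ n, x n ≤ tailSum x n) (k : ℕ) {s : ℝ} (h0 : 0 ≤ s) (hs : s ≤ tailSum x k) :
    ∃ B : Set ℕ, B ⊆ {n | k < n} ∧ sig x B = s := by
  refine ⟨Bset x k s, fun n hn => hn.1, ?_⟩
  rw [sig_eq_ind]
  have hsummB : Summable ((Bset x k s).indicator x) := hsum.indicator _
  have hrem : Tendsto (fun N : ℕ => rem x k s (N - 1)) atTop (𝓝 0) := by
    apply squeeze_zero'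
    · filter_upwards [eventually_ge_atTop (k + 1)] with N hN
      exact (rem_bound hpos hsum hIF k h0 hs (N - 1) (by omega)).1
    · filter_upwards [eventually_ge_atTop (k + 1)] with N hN
      exact (rem_bound hpos hsum hIF k h0 hs (N - 1) (by omega)).2
    · exact tailSum_tendsto.comp (tendsto_sub_atTop_nat 1)
  have htends : Tendsto (fun N => ∑ i ∈ Finset.range N, (Bset x k s).indicator x i)
      atTop (𝓝 s) := by
    have h1 : Tendsto (fun N : ℕ => s - rem x k s (N - 1)) atTop (𝓝 s) := by
      simpa using tendsto_const_nhds.sub hrem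
    refine h1.congr' ?_
    filter_upwards [eventually_ge_atTop (k + 1)] with N hN
    have := psum (x := x) k s (N - 1) (by omega)
    rw [show N - 1 + 1 = N by omega] at this
    exact this.symm
  exact ((hsummB.hasSum_iff_tendsto_nat).mpr htends).tsum_eq

noncomputable def cardFun' (x : ℕ → ℝ) (t : ℝ) : Cardinal :=
  Cardinal.mk {S : Set ℕ // sig x S = t}

def Tsub (x : ℕ → ℝ) (k : ℕ) (s : ℝ) : Type :=
  {B : Set ℕ // B ⊆ {n | k < n} ∧ sig x B = s}

lemma inter_tail_eq {k : ℕ} {A B : Set ℕ} (hA : A ⊆ {j | j ≤ k}) (hB : B ⊆ {n | k < n}) :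
    (A ∪ B) ∩ {n | k < n} = B := by
  ext n
  simp only [Set.mem_inter_iff, Set.mem_union, Set.mem_setOf_eq]
  constructor
  · rintro ⟨h1 | h1, h2⟩
    · have := hA h1
      simp only [Set.mem_setOf_eq] at this
      omega
    · exact h1
  · intro hn
    have := hB hn
    simp only [Set.mem_setOf_eq] at this
    exact ⟨Or.inr hn, this⟩

lemma mono_of_anti {x : ℕ → ℝ} (hanti : ∀ n, x (n + 1) ≤ x n) :
    ∀ i j : ℕ, i ≤ j → x j ≤ x i :=
  fun _ _ h => antitone_nat_of_succ_le hanti h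

/-- Window lemma: representations of `(∑_{j ≤ k} x j) + w` for `w` in the window
`(r_k - x_k, r_k]` are exactly `{0..k} ∪ B` with `B` a tail representation of `w`. -/
lemma window {x : ℕ → ℝ} (hpos : ∀ n, 0 < x n) (hanti : ∀ n, x (n + 1) ≤ x n)
    (hsum : Summable x) (k : ℕ) {w : ℝ}
    (hw1 : tailSum x k - x k < w) (hw2 : w ≤ tailSum x k) :
    cardFun' x ((∑ i ∈ Finset.range (k + 1), x i) + w) = Cardinal.mk (Tsub x k w) := by
  have hmono := mono_of_anti hanti
  set G := ∑ i ∈ Finset.range (k + 1), x i with hGdef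
  have hclass : ∀ S : Set ℕ, sig x S = G + w → {j | j ≤ k} ⊆ S := by
    intro S hS j hj
    simp only [Set.mem_setOf_eq] at hj
    by_contra hjS
    have hsub : S ⊆ univ \ {j} := fun n hn =>
      ⟨trivial, by simp only [Set.mem_singleton_iff]; rintro rfl; exact hjS hn⟩
    have h1 := sig_mono hpos hsum hsub
    rw [sig_compl_singleton hsum k j, hS] at h1
    have h2 : x k ≤ x j := hmono j k hj
    linarith
  let φ : Tsub x k w → {S : Set ℕ // sig x S = G + w} := fun B =>
    ⟨{j | j ≤ k} ∪ B.1, by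
      rw [sig_union hsum ((le_gt_disjoint k).mono_right B.2.1), sig_le_k, B.2.2]⟩
  have hbij : Function.Bijective φ := by
    constructor
    · intro B B' h
      have hval : {j | j ≤ k} ∪ B.1 = {j | j ≤ k} ∪ B'.1 := congrArg Subtype.val h
      apply Subtype.ext
      have e1 := inter_tail_eq (le_refl {j | j ≤ k}) B.2.1
      have e2 := inter_tail_eq (le_refl {j | j ≤ k}) B'.2.1
      rw [← e1, ← e2, hval]
    · rintro ⟨S, hS⟩
      have hsub := hclass S hS
      have hsplit := sig_split x hsum S k
      rw [Set.inter_eq_self_of_subset_right hsub, sig_le_k] at hsplit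
      refine ⟨⟨S ∩ {n | k < n}, inter_subset_right, by rw [hS] at hsplit; linarith⟩, ?_⟩
      apply Subtype.ext
      show {j | j ≤ k} ∪ (S ∩ {n | k < n}) = S
      ext n
      simp only [Set.mem_union, Set.mem_inter_iff, Set.mem_setOf_eq]
      constructor
      · rintro (h | h)
        · exact hsub h
        · exact h.1
      · intro hn
        rcases le_or_gt n k with h | h
        · exact Or.inl h
        · exact Or.inr ⟨hn, h⟩
  exact (Cardinal.mk_congr (Equiv.ofBijective φ hbij)).symm

/-- Complement symmetry for tail representations. -/
lemma tsub_symm {x : ℕ → ℝ} (hpos : ∀ n, 0 < x n) (hsum : Summable x) (k : ℕ) (s : ℝ) :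
    Cardinal.mk (Tsub x k s) = Cardinal.mk (Tsub x k (tailSum x k - s)) := by
  apply Cardinal.mk_congr
  refine ⟨fun B => ⟨{n | k < n} \ B.1, diff_subset, ?_⟩,
          fun B => ⟨{n | k < n} \ B.1, diff_subset, ?_⟩, ?_, ?_⟩
  · rw [sig_diff hpos hsum B.2.1, sig_tail, B.2.2]
  · rw [sig_diff hpos hsum B.2.1, sig_tail, B.2.2]; ring
  · intro B
    exact Subtype.ext (Set.diff_diff_cancel_left B.2.1)
  · intro B
    exact Subtype.ext (Set.diff_diff_cancel_left B.2.1)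

lemma cardFun_eq (x : ℕ → ℝ) (t : ℝ) : cardFun x t = cardFun' x t := rfl

lemma val_mem {x : ℕ → ℝ} {m : ℕ}
    (hrng : cardFun x '' achSet x = {1, (m : Cardinal)}) (t : ℝ)
    (h : ∃ S : Set ℕ, sig x S = t) :
    cardFun' x t = 1 ∨ cardFun' x t = m := by
  obtain ⟨S, hS⟩ := h
  have ht : t ∈ achSet x := ⟨S, hS⟩
  have h2 : cardFun x t ∈ cardFun x '' achSet x := Set.mem_image_of_mem _ ht
  rw [hrng] at h2
  rw [← cardFun_eq]
  simpa using h2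

theorem stmt1' (x : ℕ → ℝ) (hpos : ∀ n, 0 < x n) (hanti : ∀ n, x (n + 1) ≤ x n)
    (hsum : Summable x) (hIF : ∀ n, x n ≤ tailSum x n)
    (m : ℕ) (hm : 3 ≤ m)
    (hrng : cardFun x '' achSet x = {1, (m : Cardinal)}) :
    ∀ k, 2 * x k ≤ tailSum x k := by
  by_contra hcon
  push_neg at hcon
  obtain ⟨k, hk⟩ := hcon
  have hmono := mono_of_anti hanti
  have hxr : x k ≤ tailSum x k := hIF k
  have hG : ∑ i ∈ Finset.range (k + 1), x i = (∑ i ∈ Finset.range k, x i) + x k :=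
    Finset.sum_range_succ x k
  -- values of tail-representation counts lie in {1, m}
  have gmem : ∀ s : ℝ, 0 ≤ s → s ≤ tailSum x k →
      (Cardinal.mk (Tsub x k s) = 1 ∨ Cardinal.mk (Tsub x k s) = m) := by
    have key : ∀ w : ℝ, tailSum x k - x k < w → w ≤ tailSum x k →
        (Cardinal.mk (Tsub x k w) = 1 ∨ Cardinal.mk (Tsub x k w) = m) := by
      intro w hw1 hw2
      have hw0 : 0 ≤ w := by linarith
      obtain ⟨B, hB1, hB2⟩ := greedy hpos hsum hIF k hw0 hw2
      have hach : ∃ S : Set ℕ, sig x S = (∑ i ∈ Finset.range (k + 1), x i) + w :=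
        ⟨{j | j ≤ k} ∪ B, by
          rw [sig_union hsum ((le_gt_disjoint k).mono_right hB1), sig_le_k, hB2]⟩
      have hv := val_mem hrng _ hach
      rwa [window hpos hanti hsum k hw1 hw2] at hv
    intro s h0 h1
    rcases le_total s (tailSum x k - s) with h | h
    · have h2 := key (tailSum x k - s) (by linarith) (by linarith)
      rwa [← tsub_symm hpos hsum k s] at h2
    · exact key s (by linarith) h1
  -- Step A: there are at least two indices `j ≤ k` with `x j = x k`
  have exists_dup : ∃ j, j < k ∧ x j = x k := by
    by_contra hq
    push_neg at hq
    have hstrict : ∀ j, j < k → x k < x j := fun j hj =>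
      lt_of_le_of_ne (hmono j k hj.le) (fun he => hq j hj he.symm)
    set F := ∑ i ∈ Finset.range k, x i with hFdef
    have hsig_ne : sig x {n | n ≠ k} = F + tailSum x k := by
      rw [show {n : ℕ | n ≠ k} = univ \ {k} by
        ext n; simp [Set.mem_diff, Set.mem_singleton_iff],
        sig_compl_singleton hsum k k, hG]
      ring
    -- classification of representations of F + r
    have hjin : ∀ S : Set ℕ, sig x S = F + tailSum x k → ∀ j, j < k → j ∈ S := by
      intro S hS j hj
      by_contra hjS
      have hsub : S ⊆ univ \ {j} := fun n hn =>
        ⟨trivial, by simp only [Set.mem_singleton_iff]; rintro rfl; exact hjS hn⟩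
      have h1 := sig_mono hpos hsum hsub
      rw [sig_compl_singleton hsum k j, hS, hG] at h1
      have h2 := hstrict j hj
      linarith
    let φ : Option (Tsub x k (tailSum x k - x k)) → {S : Set ℕ // sig x S = F + tailSum x k} :=
      fun o => match o with
      | none => ⟨{n | n ≠ k}, hsig_ne⟩
      | some B => ⟨{j | j ≤ k} ∪ B.1, by
          rw [sig_union hsum ((le_gt_disjoint k).mono_right B.2.1), sig_le_k, B.2.2, hG]
          ring⟩
    have hbij : Function.Bijective φ := by
      constructor
      · rintro (_ | B) (_ | B') h
        · rfl
        · exfalso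
          have hval : {n | n ≠ k} = {j | j ≤ k} ∪ B'.1 := congrArg Subtype.val h
          have hk1 : k ∈ {j | j ≤ k} ∪ B'.1 := Or.inl (le_refl k)
          rw [← hval] at hk1
          exact hk1 rfl
        · exfalso
          have hval : {j | j ≤ k} ∪ B.1 = {n | n ≠ k} := congrArg Subtype.val h
          have hk1 : k ∈ {j | j ≤ k} ∪ B.1 := Or.inl (le_refl k)
          rw [hval] at hk1
          exact hk1 rfl
        · have hval : {j | j ≤ k} ∪ B.1 = {j | j ≤ k} ∪ B'.1 := congrArg Subtype.val h
          have : B = B' := by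
            apply Subtype.ext
            have e1 := inter_tail_eq (le_refl {j | j ≤ k}) B.2.1
            have e2 := inter_tail_eq (le_refl {j | j ≤ k}) B'.2.1
            rw [← e1, ← e2, hval]
          rw [this]
      · rintro ⟨S, hS⟩
        by_cases hkS : k ∈ S
        · have hsub : {j | j ≤ k} ⊆ S := by
            intro j hj
            simp only [Set.mem_setOf_eq] at hj
            rcases lt_or_eq_of_le hj with h | h
            · exact hjin S hS j h
            · rw [h]; exact hkS
          have hsplit := sig_split x hsum S k
          rw [Set.inter_eq_self_of_subset_right hsub, sig_le_k, hS, hG] at hsplit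
          refine ⟨some ⟨S ∩ {n | k < n}, inter_subset_right, by linarith⟩, ?_⟩
          apply Subtype.ext
          show {j | j ≤ k} ∪ (S ∩ {n | k < n}) = S
          ext n
          simp only [Set.mem_union, Set.mem_inter_iff, Set.mem_setOf_eq]
          constructor
          · rintro (h | h)
            · exact hsub h
            · exact h.1
          · intro hn
            rcases le_or_gt n k with h | h
            · exact Or.inl h
            · exact Or.inr ⟨hn, h⟩
        · refine ⟨none, ?_⟩
          apply Subtype.ext
          show {n | n ≠ k} = S
          symm
          apply eq_of_subset_sig_le hpos hsum
          · intro n hn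
            show n ≠ k
            rintro rfl; exact hkS hn
          · rw [hS, hsig_ne]
    have hcardA : cardFun' x (F + tailSum x k) =
        Cardinal.mk (Tsub x k (tailSum x k - x k)) + 1 := by
      rw [cardFun', ← Cardinal.mk_option]
      exact (Cardinal.mk_congr (Equiv.ofBijective φ hbij)).symm
    have hv := val_mem hrng _ ⟨{n | n ≠ k}, hsig_ne⟩
    rw [hcardA] at hv
    rcases gmem (tailSum x k - x k) (by linarith) (by linarith [hpos k]) with hg | hg
    · rw [hg] at hv
      rcases hv with h | h
      · have : (1 : Cardinal) + 1 = ((2 : ℕ) : Cardinal) := by norm_cast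
        rw [this] at h
        have : (2 : ℕ) = 1 := by exact_mod_cast h
        omega
      · have : (1 : Cardinal) + 1 = ((2 : ℕ) : Cardinal) := by norm_cast
        rw [this] at h
        have : (2 : ℕ) = m := by exact_mod_cast h
        omega
    · rw [hg] at hv
      rcases hv with h | h
      · have : ((m : Cardinal)) + 1 = ((m + 1 : ℕ) : Cardinal) := by norm_cast
        rw [this] at h
        have : m + 1 = 1 := by exact_mod_cast h
        omega
      · have : ((m : Cardinal)) + 1 = ((m + 1 : ℕ) : Cardinal) := by norm_cast
        rw [this] at h
        have : m + 1 = m := by exact_mod_cast h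
        omega
  obtain ⟨j₀, hj₀k, hj₀x⟩ := exists_dup
  -- Step D : the value x (k+1) has at least two tail representations, hence exactly m
  have hx1r : x (k + 1) ≤ tailSum x k := by
    have := tailSum_succ hsum k
    have h2 := tailSum_nonneg hpos (k + 1)
    linarith
  have hgm : Cardinal.mk (Tsub x k (x (k + 1))) = m := by
    have hg2 : (2 : Cardinal) ≤ Cardinal.mk (Tsub x k (x (k + 1))) := by
      rw [Cardinal.two_le_iff]
      obtain ⟨B2, hB2sub, hB2⟩ := greedy hpos hsum hIF (k + 1) (hpos (k + 1)).le (hIF (k + 1))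
      refine ⟨⟨{k + 1}, ?_, sig_singleton x (k + 1)⟩,
              ⟨B2, fun n hn => ?_, hB2⟩, ?_⟩
      · intro n hn
        simp only [Set.mem_singleton_iff] at hn
        simp only [Set.mem_setOf_eq]
        omega
      · have := hB2sub hn
        simp only [Set.mem_setOf_eq] at this ⊢
        omega
      · intro heq
        have hval : ({k + 1} : Set ℕ) = B2 := congrArg Subtype.val heq
        have : k + 1 ∈ B2 := hval ▸ rfl
        have := hB2sub this
        simp only [Set.mem_setOf_eq] at this
        omega
    rcases gmem (x (k + 1)) (hpos (k + 1)).le hx1r with hg | hg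
    · rw [hg] at hg2
      have : (2 : ℕ) ≤ (1 : ℕ) := by exact_mod_cast hg2
      omega
    · exact hg
  -- Step F : two disjoint families of representations of F + x (k+1), contradiction
  set F := ∑ i ∈ Finset.range k, x i with hFdef
  set s' := x (k + 1) with hs'def
  have hj₀le : j₀ ∈ {j | j ≤ k} := by simp only [Set.mem_setOf_eq]; omega
  let ψ : (Tsub x k s') ⊕ (Tsub x k s') → {S : Set ℕ // sig x S = F + s'} := fun z =>
    match z with
    | Sum.inl B => ⟨{j | j < k} ∪ B.1, by
        rw [sig_union hsum ((lt_gt_disjoint k).mono_right B.2.1), sig_lt_k, B.2.2]⟩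
    | Sum.inr B => ⟨({j | j ≤ k} \ {j₀}) ∪ B.1, by
        rw [sig_union hsum (((le_gt_disjoint k).mono_left diff_subset).mono_right B.2.1),
          sig_diff_singleton hsum hj₀le, sig_le_k, hG, hj₀x, B.2.2]
        ring⟩
  have hψinj : Function.Injective ψ := by
    have hkmem2 : ∀ B : Tsub x k s', k ∈ ({j | j ≤ k} \ {j₀}) ∪ B.1 :=
      fun B => Or.inl ⟨le_refl k, by simp only [Set.mem_singleton_iff]; omega⟩
    have hkmem1 : ∀ B : Tsub x k s', k ∉ {j | j < k} ∪ B.1 := by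
      rintro B (h | h)
      · simp only [Set.mem_setOf_eq] at h; omega
      · have := B.2.1 h
        simp only [Set.mem_setOf_eq] at this; omega
    rintro (B | B) (B' | B') h
    · have hval : {j | j < k} ∪ B.1 = {j | j < k} ∪ B'.1 := congrArg Subtype.val h
      have : B = B' := by
        apply Subtype.ext
        have e1 := inter_tail_eq (fun n (hn : n ∈ {j | j < k}) =>
          (by simp only [Set.mem_setOf_eq] at hn ⊢; omega : n ∈ {j | j ≤ k})) B.2.1
        have e2 := inter_tail_eq (fun n (hn : n ∈ {j | j < k}) =>
          (by simp only [Set.mem_setOf_eq] at hn ⊢; omega : n ∈ {j | j ≤ k})) B'.2.1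
        rw [← e1, ← e2, hval]
      rw [this]
    · exfalso
      have hval : {j | j < k} ∪ B.1 = ({j | j ≤ k} \ {j₀}) ∪ B'.1 := congrArg Subtype.val h
      exact hkmem1 B (hval ▸ hkmem2 B')
    · exfalso
      have hval : ({j | j ≤ k} \ {j₀}) ∪ B.1 = {j | j < k} ∪ B'.1 := congrArg Subtype.val h
      exact hkmem1 B' (hval ▸ hkmem2 B)
    · have hval : ({j | j ≤ k} \ {j₀}) ∪ B.1 = ({j | j ≤ k} \ {j₀}) ∪ B'.1 :=
        congrArg Subtype.val h
      have : B = B' := by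
        apply Subtype.ext
        have e1 := inter_tail_eq (diff_subset (s := {j | j ≤ k}) (t := {j₀})) B.2.1
        have e2 := inter_tail_eq (diff_subset (s := {j | j ≤ k}) (t := {j₀})) B'.2.1
        rw [← e1, ← e2, hval]
      rw [this]
  have hle : (m : Cardinal) + m ≤ cardFun' x (F + s') := by
    have h1 : Cardinal.mk ((Tsub x k s') ⊕ (Tsub x k s')) ≤
        Cardinal.mk {S : Set ℕ // sig x S = F + s'} :=
      Cardinal.mk_le_of_injective hψinj
    rwa [Cardinal.mk_sum, Cardinal.lift_id, hgm] at h1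
  have hach2 : ∃ S : Set ℕ, sig x S = F + s' := by
    refine ⟨{j | j < k} ∪ {k + 1}, ?_⟩
    rw [sig_union hsum ((lt_gt_disjoint k).mono_right (by
      intro n hn
      simp only [Set.mem_singleton_iff] at hn
      simp only [Set.mem_setOf_eq]
      omega)), sig_lt_k, sig_singleton]
  rcases val_mem hrng _ hach2 with h | h
  · rw [h] at hle
    have : m + m ≤ 1 := by exact_mod_cast hle
    omega
  · rw [h] at hle
    have : m + m ≤ m := by exact_mod_cast hle
    omega

end Stmt1Aux

theorem stmt1 (x : ℕ → ℝ) (hpos : ∀ n, 0 < x n) (hanti : ∀ n, x (n + 1) ≤ x n)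
    (hsum : Summable x) (hIF : ∀ n, x n ≤ tailSum x n)
    (m : ℕ) (hm : 3 ≤ m)
    (hrng : cardFun x '' achSet x = {1, (m : Cardinal)}) :
    ∀ k, 2 * x k ≤ tailSum x k :=
  Stmt1Aux.stmt1' x hpos hanti hsum hIF m hm hrng
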